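/- Let G ∈ 𝒜₁ with γ(G) = k, and suppose G has minimum restraint r+1 realized by an (r, r+1)-restraining set. Then for every graph H, (γ(G)+1)·γ(H) ≤ ((r+1)/r)·γ(G □ H). -/
import Mathlib


open Finset

/-- `S` dominates `T`: every vertex of `T` is in the closed neighborhood of `S`. -/
def Dominates {V : Type*} (G : SimpleGraph V) (S T : Set V) : Prop :=
  ∀ t ∈ T, ∃ s ∈ S, s = t ∨ G.Adj s t

/-- The domination number of a finite graph. -/
noncomputable def domNum {V : Type*} [Fintype V] (G : SimpleGraph V) : ℕ :=
  sInf {n | ∃ D : Finset V, D.card = n ∧ Dominates G ↑D Set.univ}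

/-- A partition of the vertex set of `G` into `m` cliques. -/
structure CliquePartition {V : Type*} (G : SimpleGraph V) (m : ℕ) where
  parts : Fin m → Finset V
  disj : ∀ i j, i ≠ j → Disjoint (parts i) (parts j)
  cover : ∀ v, ∃ i, v ∈ parts i
  clique : ∀ i, G.IsClique ↑(parts i)

/-- The clique covering number: minimum number of cliques partitioning `V(G)`. -/
noncomputable def cliqueCoverNum {V : Type*} [Fintype V] (G : SimpleGraph V) : ℕ :=
  sInf {m | Nonempty (CliquePartition G m)}

/-- The class `𝒟ₙ`: `θ(G) = γ(G) + n` and `G` is not a spanning subgraph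
(with equal domination number) of a graph in `𝒟ₘ` for `m < n`. -/
def InD {V : Type*} [Fintype V] (n : ℕ) (G : SimpleGraph V) : Prop :=
  cliqueCoverNum G = domNum G + n ∧
    ∀ m : ℕ, m < n → ∀ H : SimpleGraph V, G ≤ H → domNum G = domNum H → ¬ InD m H
termination_by n

/-- The class `𝒜ₙ`: spanning subgraphs (with equal domination number) of graphs in `𝒟ₙ`. -/
def InA {V : Type*} [Fintype V] (n : ℕ) (G : SimpleGraph V) : Prop :=
  ∃ H : SimpleGraph V, G ≤ H ∧ domNum G = domNum H ∧ InD n H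


/-- `S` is restraining with avoided-and-dominated cliques indexed by `L` and met
cliques indexed by `T` (so `S` is `(|S|, |L|+|T|)`-restraining; its restraint is
`|L| + |T|` and its excess `|L| + |T| − |S|`). -/
def IsRestrainingOn {V : Type*} [DecidableEq V] {G : SimpleGraph V} {m : ℕ}
    (P : CliquePartition G m) (S : Finset V) (L T : Finset (Fin m)) : Prop :=
  Disjoint L T ∧
  (∀ i ∈ L, Disjoint S (P.parts i)) ∧
  Dominates G ↑S ↑(L.biUnion P.parts) ∧
  (S ⊆ T.biUnion P.parts) ∧
  (∀ i ∈ T, (P.parts i ∩ S).Nonempty)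

private lemma domNum_le_card {V : Type*} [Fintype V] (G : SimpleGraph V) {D : Finset V}
    (hD : Dominates G ↑D Set.univ) : domNum G ≤ D.card :=
  Nat.sInf_le ⟨D, rfl, hD⟩

private lemma exists_minDom {V : Type*} [Fintype V] (G : SimpleGraph V) :
    ∃ D : Finset V, D.card = domNum G ∧ Dominates G ↑D Set.univ := by
  have hne : {n | ∃ D : Finset V, D.card = n ∧ Dominates G ↑D Set.univ}.Nonempty :=
    ⟨(Finset.univ : Finset V).card, Finset.univ, rfl, fun t _ => ⟨t, by simp, Or.inl rfl⟩⟩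
  obtain ⟨D, hD1, hD2⟩ := Nat.sInf_mem hne
  exact ⟨D, hD1, hD2⟩

private lemma t_card_le {V : Type*} [Fintype V] [DecidableEq V] {G' : SimpleGraph V} {m : ℕ}
    {P : CliquePartition G' m} {S : Finset V} {L T : Finset (Fin m)}
    (h : IsRestrainingOn P S L T) : T.card ≤ S.card := by
  classical
  obtain ⟨-, -, -, -, hTne⟩ := h
  rcases T.eq_empty_or_nonempty with hT | hT
  · simp [hT]
  obtain ⟨i0, hi0⟩ := hT
  obtain ⟨v0, hv0⟩ := hTne i0 hi0
  have hfS : ∀ i ∈ T, (fun i => if hi : (P.parts i ∩ S).Nonempty then hi.choose else v0) i ∈ S := by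
    intro i hi
    have hne := hTne i hi
    simp only [dif_pos hne]
    exact (Finset.mem_inter.mp hne.choose_spec).2
  have hfP : ∀ i ∈ T, (fun i => if hi : (P.parts i ∩ S).Nonempty then hi.choose else v0) i ∈ P.parts i := by
    intro i hi
    have hne := hTne i hi
    simp only [dif_pos hne]
    exact (Finset.mem_inter.mp hne.choose_spec).1
  refine Finset.card_le_card_of_injOn _ hfS ?_
  intro i hi j hj hij
  by_contra hne
  exact (Finset.disjoint_left.mp (P.disj i j hne)
    (hfP i (Finset.mem_coe.mp hi))) (hij ▸ hfP j (Finset.mem_coe.mp hj))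

private lemma excess_le_one {V : Type*} [Fintype V] [DecidableEq V] {G' : SimpleGraph V}
    (P : CliquePartition G' (domNum G' + 1)) {S : Finset V}
    {L T : Finset (Fin (domNum G' + 1))}
    (h : IsRestrainingOn P S L T) : L.card + T.card ≤ S.card + 1 := by
  classical
  obtain ⟨hLT, hLdisj, hLdom, hST, hTne⟩ := h
  set U : Finset (Fin (domNum G' + 1)) :=
    (Finset.univ \ (L ∪ T)).filter (fun i => (P.parts i).Nonempty) with hU
  have hUmem : ∀ i ∈ U, (P.parts i).Nonempty := fun i hi => (Finset.mem_filter.mp hi).2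
  have hdom : Dominates G'
      ↑(S ∪ U.attach.image (fun x : {i // i ∈ U} => (hUmem x.1 x.2).choose)) Set.univ := by
    intro v _
    obtain ⟨i, hi⟩ := P.cover v
    by_cases hiL : i ∈ L
    · obtain ⟨s, hs, hadj⟩ := hLdom v (Finset.mem_coe.mpr (Finset.mem_biUnion.mpr ⟨i, hiL, hi⟩))
      exact ⟨s, Finset.mem_coe.mpr (Finset.mem_union_left _ (Finset.mem_coe.mp hs)), hadj⟩
    by_cases hiT : i ∈ T
    · obtain ⟨s, hs⟩ := hTne i hiT
      have hs1 := (Finset.mem_inter.mp hs).1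
      have hs2 := (Finset.mem_inter.mp hs).2
      refine ⟨s, Finset.mem_coe.mpr (Finset.mem_union_left _ hs2), ?_⟩
      rcases eq_or_ne s v with rfl | hne
      · exact Or.inl rfl
      · exact Or.inr (P.clique i (Finset.mem_coe.mpr hs1) (Finset.mem_coe.mpr hi) hne)
    · have hiU : i ∈ U := by
        refine Finset.mem_filter.mpr ⟨Finset.mem_sdiff.mpr ⟨Finset.mem_univ _, ?_⟩, ⟨v, hi⟩⟩
        simp [hiL, hiT]
      have hsP : (hUmem i hiU).choose ∈ P.parts i := (hUmem i hiU).choose_spec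
      refine ⟨(hUmem i hiU).choose, Finset.mem_coe.mpr (Finset.mem_union_right _ ?_), ?_⟩
      · exact Finset.mem_image.mpr ⟨⟨i, hiU⟩, Finset.mem_attach _ _, rfl⟩
      · rcases eq_or_ne (hUmem i hiU).choose v with heq | hne
        · exact Or.inl heq
        · exact Or.inr (P.clique i (Finset.mem_coe.mpr hsP) (Finset.mem_coe.mpr hi) hne)
  have h1 : domNum G' ≤
      (S ∪ U.attach.image (fun x : {i // i ∈ U} => (hUmem x.1 x.2).choose)).card :=
    domNum_le_card G' hdom
  have h2 : (S ∪ U.attach.image (fun x : {i // i ∈ U} => (hUmem x.1 x.2).choose)).card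
      ≤ S.card + U.card := by
    refine le_trans (Finset.card_union_le _ _) ?_
    have ha := Finset.card_image_le (s := U.attach)
      (f := fun x : {i // i ∈ U} => (hUmem x.1 x.2).choose)
    rw [Finset.card_attach] at ha
    omega
  have h3 : U.card ≤ (domNum G' + 1) - (L.card + T.card) := by
    have hsub : U ⊆ Finset.univ \ (L ∪ T) := Finset.filter_subset _ _
    have hc := Finset.card_le_card hsub
    rw [Finset.card_sdiff_of_subset (Finset.subset_univ _), Finset.card_union_of_disjoint hLT] at hc
    simpa using hc
  have h4 : L.card + T.card ≤ domNum G' + 1 := by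
    have hc := Finset.card_le_univ (L ∪ T)
    rw [Finset.card_union_of_disjoint hLT] at hc
    simpa using hc
  omega


/-- Overcount bound: if `G ∈ 𝒜₁` has minimum restraint `r + 1`, realized by an
`(r, r+1)`-restraining set, then for every graph `H`,
`(γ(G)+1)·γ(H) ≤ ((r+1)/r)·γ(G □ H)`. -/
theorem stmt17 {V : Type*} [Fintype V] [DecidableEq V] (r : ℕ) (hr : 1 ≤ r)
    (G : SimpleGraph V) (hG : InA 1 G)
    (G' : SimpleGraph V) (hsub : G ≤ G') (hγ : domNum G = domNum G') (hG' : InD 1 G')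
    (P : CliquePartition G' (domNum G' + 1))
    (S : Finset V) (L T : Finset (Fin (domNum G' + 1)))
    (hS : IsRestrainingOn P S L T) (hScard : S.card = r)
    (hrestraint : L.card + T.card = r + 1)
    (hmin : ∀ (S' : Finset V) (L' T' : Finset (Fin (domNum G' + 1))),
      IsRestrainingOn P S' L' T' → L'.card + T'.card = S'.card + 1 →
      r + 1 ≤ L'.card + T'.card) :
    ∀ (W : Type) [Fintype W] (H : SimpleGraph W),
      ((domNum G + 1) * domNum H : ℝ) ≤
        ((r + 1 : ℝ) / r) * domNum (G.boxProd H) := by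
  intro W _W H
  classical
  obtain ⟨D, hDcard, hDdom⟩ := exists_minDom (G.boxProd H)
  set Dh : W → Finset (V × W) := fun h => D.filter (fun p => p.2 = h) with hDh
  set Sh : W → Finset V := fun h => (Dh h).image Prod.fst with hSh
  set Th : W → Finset (Fin (domNum G' + 1)) :=
    fun h => Finset.univ.filter (fun i => (P.parts i ∩ Sh h).Nonempty) with hTh
  set Lh : W → Finset (Fin (domNum G' + 1)) :=
    fun h => Finset.univ.filter
      (fun i => ∀ g ∈ P.parts i, ∀ h' : W, (h' = h ∨ H.Adj h' h) → (g, h') ∉ D) with hLh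
  have hmemS : ∀ (h : W) (g : V), g ∈ Sh h ↔ (g, h) ∈ D := by
    intro h g
    simp only [hSh, hDh, Finset.mem_image, Finset.mem_filter]
    constructor
    · rintro ⟨⟨p1, p2⟩, ⟨hpD, rfl⟩, rfl⟩
      exact hpD
    · intro hgD
      exact ⟨(g, h), ⟨hgD, rfl⟩, rfl⟩
  have hrestrain : ∀ h : W, IsRestrainingOn P (Sh h) (Lh h) (Th h) := by
    intro h
    refine ⟨?_, ?_, ?_, ?_, ?_⟩
    · rw [Finset.disjoint_left]
      intro i hiL hiT
      simp only [hTh, Finset.mem_filter, Finset.mem_univ, true_and] at hiT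
      obtain ⟨g, hg⟩ := hiT
      simp only [hLh, Finset.mem_filter, Finset.mem_univ, true_and] at hiL
      exact hiL g (Finset.mem_inter.mp hg).1 h (Or.inl rfl)
        ((hmemS h g).mp (Finset.mem_inter.mp hg).2)
    · intro i hiL
      simp only [hLh, Finset.mem_filter, Finset.mem_univ, true_and] at hiL
      rw [Finset.disjoint_left]
      intro g hgS hgP
      exact hiL g hgP h (Or.inl rfl) ((hmemS h g).mp hgS)
    · intro t ht
      rw [Finset.mem_coe, Finset.mem_biUnion] at ht
      obtain ⟨i, hiL, hti⟩ := ht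
      simp only [hLh, Finset.mem_filter, Finset.mem_univ, true_and] at hiL
      obtain ⟨d, hdD, hd⟩ := hDdom (t, h) (Set.mem_univ _)
      rw [Finset.mem_coe] at hdD
      rcases hd with rfl | hadj
      · exact absurd hdD (hiL t hti h (Or.inl rfl))
      · rw [SimpleGraph.boxProd_adj] at hadj
        rcases hadj with ⟨hGadj, hd2⟩ | ⟨hHadj, hd1⟩
        · have hd2' : d.2 = h := hd2
          have hG' : G'.Adj d.1 t := hsub hGadj
          refine ⟨d.1, ?_, Or.inr hG'⟩
          rw [Finset.mem_coe, hmemS]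
          rw [← hd2', Prod.mk.eta]
          exact hdD
        · have hd1' : d.1 = t := hd1
          have hH' : H.Adj d.2 h := hHadj
          refine absurd ?_ (hiL t hti d.2 (Or.inr hH'))
          rw [← hd1', Prod.mk.eta]
          exact hdD
    · intro g hgS
      obtain ⟨i, hi⟩ := P.cover g
      refine Finset.mem_biUnion.mpr ⟨i, ?_, hi⟩
      simp only [hTh, Finset.mem_filter, Finset.mem_univ, true_and]
      exact ⟨g, Finset.mem_inter.mpr ⟨hi, hgS⟩⟩
    · intro i hiT
      simp only [hTh, Finset.mem_filter, Finset.mem_univ, true_and] at hiT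
      exact hiT
  have fiber : ∀ h : W, r * ((Lh h).card + (Th h).card) ≤ (r + 1) * (Dh h).card := by
    intro h
    have hts : (Th h).card ≤ (Sh h).card := t_card_le (hrestrain h)
    have hsn : (Sh h).card ≤ (Dh h).card := by
      rw [hSh]
      exact Finset.card_image_le
    have hle : (Lh h).card + (Th h).card ≤ (Sh h).card + 1 := excess_le_one P (hrestrain h)
    by_cases hc : (Lh h).card + (Th h).card = (Sh h).card + 1
    · have hmin' := hmin (Sh h) (Lh h) (Th h) (hrestrain h) hc
      have hrs : r ≤ (Sh h).card := by omega
      calc r * ((Lh h).card + (Th h).card) = r * (Sh h).card + r := by rw [hc]; ring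
        _ ≤ r * (Sh h).card + (Sh h).card := by omega
        _ = (r + 1) * (Sh h).card := by ring
        _ ≤ (r + 1) * (Dh h).card := Nat.mul_le_mul_left _ hsn
    · have h5 : (Lh h).card + (Th h).card ≤ (Sh h).card := by omega
      calc r * ((Lh h).card + (Th h).card) ≤ r * (Dh h).card :=
          Nat.mul_le_mul_left _ (le_trans h5 hsn)
        _ ≤ (r + 1) * (Dh h).card := Nat.mul_le_mul_right _ (Nat.le_succ r)
  set Ai : Fin (domNum G' + 1) → Finset W :=
    fun i => Finset.univ.filter (fun h => (P.parts i ∩ Sh h).Nonempty) with hAi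
  set Bi : Fin (domNum G' + 1) → Finset W :=
    fun i => Finset.univ.filter
      (fun h => ∀ g ∈ P.parts i, ∀ h' : W, (h' = h ∨ H.Adj h' h) → (g, h') ∉ D) with hBi
  have hAB : ∀ i, domNum H ≤ (Ai i).card + (Bi i).card := by
    intro i
    have hdom : Dominates H ↑(Ai i ∪ Bi i) Set.univ := by
      intro h _
      by_cases hB : ∀ g ∈ P.parts i, ∀ h' : W, (h' = h ∨ H.Adj h' h) → (g, h') ∉ D
      · refine ⟨h, Finset.mem_coe.mpr (Finset.mem_union_right _ ?_), Or.inl rfl⟩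
        simp only [hBi, Finset.mem_filter, Finset.mem_univ, true_and]
        exact hB
      · push_neg at hB
        obtain ⟨g, hg, h', hadj, hgD⟩ := hB
        refine ⟨h', Finset.mem_coe.mpr (Finset.mem_union_left _ ?_), hadj⟩
        simp only [hAi, Finset.mem_filter, Finset.mem_univ, true_and]
        exact ⟨g, Finset.mem_inter.mpr ⟨hg, (hmemS h' g).mpr hgD⟩⟩
    calc domNum H ≤ (Ai i ∪ Bi i).card := domNum_le_card H hdom
      _ ≤ (Ai i).card + (Bi i).card := Finset.card_union_le _ _
  have hsum1 : ∑ i, (Ai i).card = ∑ h, (Th h).card := by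
    simp only [hAi, hTh, Finset.card_filter]
    exact Finset.sum_comm
  have hsum2 : ∑ i, (Bi i).card = ∑ h, (Lh h).card := by
    simp only [hBi, hLh, Finset.card_filter]
    exact Finset.sum_comm
  have hsumD : D.card = ∑ h, (Dh h).card := by
    simp only [hDh]
    exact Finset.card_eq_sum_card_fiberwise (f := Prod.snd) (fun x _ => Finset.mem_univ x.2)
  have c1 : (domNum G' + 1) * domNum H ≤ ∑ h, ((Lh h).card + (Th h).card) := by
    calc (domNum G' + 1) * domNum H
        = ∑ _i : Fin (domNum G' + 1), domNum H := by
          rw [Finset.sum_const, smul_eq_mul, Finset.card_univ, Fintype.card_fin]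
      _ ≤ ∑ i, ((Ai i).card + (Bi i).card) := Finset.sum_le_sum fun i _ => hAB i
      _ = ∑ h, ((Lh h).card + (Th h).card) := by
          rw [Finset.sum_add_distrib, Finset.sum_add_distrib, hsum1, hsum2, add_comm]
  have c2 : r * (∑ h, ((Lh h).card + (Th h).card)) ≤ (r + 1) * domNum (G.boxProd H) := by
    rw [← hDcard, hsumD, Finset.mul_sum, Finset.mul_sum]
    exact Finset.sum_le_sum fun h _ => fiber h
  have key : r * ((domNum G + 1) * domNum H) ≤ (r + 1) * domNum (G.boxProd H) := by
    rw [hγ]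
    calc r * ((domNum G' + 1) * domNum H) ≤ r * ∑ h, ((Lh h).card + (Th h).card) :=
        Nat.mul_le_mul_left _ c1
      _ ≤ (r + 1) * domNum (G.boxProd H) := c2
  have hrpos : (0 : ℝ) < r := by
    have : 0 < r := hr
    exact_mod_cast this
  rw [div_mul_eq_mul_div, le_div_iff₀ hrpos]
  have key' : ((r : ℝ)) * (((domNum G : ℝ) + 1) * (domNum H : ℝ)) ≤
      ((r : ℝ) + 1) * (domNum (G.boxProd H) : ℝ) := by
    exact_mod_cast key
  calc ((domNum G : ℝ) + 1) * (domNum H : ℝ) * (r : ℝ)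
      = (r : ℝ) * (((domNum G : ℝ) + 1) * (domNum H : ℝ)) := by ring
    _ ≤ ((r : ℝ) + 1) * (domNum (G.boxProd H) : ℝ) := key'
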